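/- Let r : ℂ → ℝ be a C² function of constant width w, and assume that the functions (r+ψ)² − |σ|² and |σ|² − (r − w/2 + ψ)² are μ-integrable. Then ∫ℂ ((r+ψ)² − |σ|²) dμ = π·w² − ∫ℂ (|σ|² − (r − w/2 + ψ)²) dμ. -/

import Mathlib

open Complex MeasureTheory ComplexConjugate

noncomputable section

/-- Wirtinger derivative ∂/∂ξ of a complex-valued function. -/
def wd (f : ℂ → ℂ) (ξ : ℂ) : ℂ :=
  (1 / 2) * (fderiv ℝ f ξ 1 - Complex.I * fderiv ℝ f ξ Complex.I)

/-- Wirtinger derivative ∂/∂ξ̄ of a real-valued function, as a complex number. -/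
def wdbarR (r : ℂ → ℝ) (ξ : ℂ) : ℂ :=
  (1 / 2) * ((fderiv ℝ r ξ 1 : ℝ) + Complex.I * (fderiv ℝ r ξ Complex.I : ℝ))

/-- F = (1/2)(1+|ξ|²)² ∂r/∂ξ̄. -/
def Fcong (r : ℂ → ℝ) (ξ : ℂ) : ℂ :=
  (1 / 2) * ((1 + Complex.normSq ξ) ^ 2 : ℝ) * wdbarR r ξ

/-- ψ = (1+|ξ|²)² ∂/∂ξ [F/(1+|ξ|²)²] (real-valued). -/
def psiSlope (r : ℂ → ℝ) (ξ : ℂ) : ℝ :=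
  (((1 + Complex.normSq ξ) ^ 2 : ℝ) *
    wd (fun z => Fcong r z / (((1 + Complex.normSq z) ^ 2 : ℝ) : ℂ)) ξ).re

/-- σ = −∂(conj F)/∂ξ. -/
def sigmaSlope (r : ℂ → ℝ) (ξ : ℂ) : ℂ :=
  - wd (fun z => conj (Fcong r z)) ξ

/-- The round sphere area measure in the stereographic coordinate. -/
def muSphere : Measure ℂ :=
  volume.withDensity fun ξ => ENNReal.ofReal (4 / (1 + Complex.normSq ξ) ^ 2)

/-- Constant width w: r(ξ) + r(−1/conj ξ) = w for all ξ ≠ 0. -/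
def ConstWidth (r : ℂ → ℝ) (w : ℝ) : Prop :=
  ∀ ξ : ℂ, ξ ≠ 0 → r ξ + r (-1 / conj ξ) = w

/-! ### Auxiliary definitions and lemmas -/

section Aux

open Set Metric

/-- The Laplacian-type second derivative combination. -/
def lap (r : ℂ → ℝ) (ξ : ℂ) : ℝ :=
  fderiv ℝ (fderiv ℝ r) ξ 1 1 + fderiv ℝ (fderiv ℝ r) ξ Complex.I Complex.I

/-- Complex conjugation as a real-linear CLM. -/
def conjCLM : ℂ →L[ℝ] ℂ := Complex.conjCLE.toContinuousLinearMap

@[simp] lemma conjCLM_apply (z : ℂ) : conjCLM z = conj z := rfl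

/-- Antiholomorphic scaling map. -/
def Lc (a : ℂ) : ℂ →L[ℝ] ℂ := a • conjCLM

@[simp] lemma Lc_apply (a z : ℂ) : Lc a z = a * conj z := rfl

/-- The antipodal map in the stereographic chart. -/
def Amap (ξ : ℂ) : ℂ := -1 / conj ξ

/-- The stereographic density. -/
def dens (ξ : ℂ) : ℝ := 4 / (1 + Complex.normSq ξ) ^ 2

lemma hasFDerivAt_wdbarR {r : ℂ → ℝ} (hr : ContDiff ℝ 2 r) (ξ : ℂ) :
    HasFDerivAt (wdbarR r)
      ((1/2 : ℂ) • (Complex.ofRealCLM.comp ((fderiv ℝ (fderiv ℝ r) ξ).flip 1)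
        + Complex.I • Complex.ofRealCLM.comp ((fderiv ℝ (fderiv ℝ r) ξ).flip Complex.I))) ξ := by
  have h1 : ContDiff ℝ 1 (fderiv ℝ r) := hr.fderiv_right (le_refl _)
  have hD : HasFDerivAt (fderiv ℝ r) (fderiv ℝ (fderiv ℝ r) ξ) ξ :=
    (h1.differentiable one_ne_zero ξ).hasFDerivAt
  have hv : ∀ v : ℂ, HasFDerivAt (fun z => ((fderiv ℝ r z v : ℝ) : ℂ))
      (Complex.ofRealCLM.comp ((fderiv ℝ (fderiv ℝ r) ξ).flip v)) ξ := by
    intro v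
    have h2 := hD.clm_apply (hasFDerivAt_const v ξ)
    have h3 := Complex.ofRealCLM.hasFDerivAt.comp ξ h2
    convert h3 using 1 <;> try rfl
    ext w
    simp
  have h4 := ((hv 1).add ((hv Complex.I).const_mul Complex.I)).const_mul (1/2 : ℂ)
  convert h4 using 1 <;> try rfl

lemma psi_eq {r : ℂ → ℝ} (hr : ContDiff ℝ 2 r) (ξ : ℂ) :
    psiSlope r ξ = (1 + Complex.normSq ξ) ^ 2 / 8 * lap r ξ := by
  have hs : ∀ z : ℂ, (((1 + Complex.normSq z) ^ 2 : ℝ) : ℂ) ≠ 0 := by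
    intro z
    have h0 : (0:ℝ) < (1 + Complex.normSq z) ^ 2 := by
      nlinarith [Complex.normSq_nonneg z]
    exact_mod_cast h0.ne'
  have hfun : (fun z => Fcong r z / (((1 + Complex.normSq z) ^ 2 : ℝ) : ℂ))
      = fun z => (1/2 : ℂ) * wdbarR r z := by
    funext z
    rw [Fcong, div_eq_iff (hs z)]
    ring
  rw [psiSlope, hfun]
  have hw := hasFDerivAt_wdbarR hr ξ
  have hdiff : DifferentiableAt ℝ (wdbarR r) ξ := hw.differentiableAt
  rw [wd, fderiv_const_mul hdiff, hw.fderiv, Complex.re_ofReal_mul]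
  set S := fderiv ℝ (fderiv ℝ r) ξ
  simp only [ContinuousLinearMap.smul_apply, ContinuousLinearMap.add_apply,
    ContinuousLinearMap.coe_comp', Function.comp_apply, ContinuousLinearMap.flip_apply,
    Complex.ofRealCLM_apply, smul_eq_mul, ContinuousLinearMap.coe_smul', Pi.smul_apply]
  simp only [lap, Complex.mul_re, Complex.sub_re, Complex.add_re, Complex.mul_im, Complex.sub_im,
    Complex.add_im, Complex.I_re, Complex.I_im, Complex.ofReal_re, Complex.ofReal_im,
    Complex.one_re, Complex.one_im, Complex.div_re, Complex.div_im]
  norm_num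
  ring

lemma quad (S' : ℂ →L[ℝ] ℂ →L[ℝ] ℝ) (hsym : ∀ v w, S' v w = S' w v) (a : ℂ) :
    S' a a + S' (Complex.I * a) (Complex.I * a)
      = Complex.normSq a * (S' 1 1 + S' Complex.I Complex.I) := by
  obtain ⟨x, y⟩ := a
  have h1 : (Complex.mk x y) = x • (1:ℂ) + y • Complex.I := by
    simp [Complex.real_smul, Complex.ext_iff]
  have h2 : Complex.I * (Complex.mk x y) = (-y) • (1:ℂ) + x • Complex.I := by
    simp [Complex.real_smul, Complex.ext_iff]
  rw [Complex.normSq_mk, h2, h1]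
  simp only [map_add, _root_.map_smul, ContinuousLinearMap.add_apply,
    ContinuousLinearMap.smul_apply, smul_eq_mul]
  rw [hsym Complex.I 1]
  ring

lemma hasFDerivAt_Amap {ξ : ℂ} (hξ : ξ ≠ 0) :
    HasFDerivAt Amap (Lc ((conj ξ ^ 2)⁻¹)) ξ := by
  have hc : (conj ξ : ℂ) ≠ 0 := by simpa using hξ
  have h1 : HasDerivAt (fun u : ℂ => -u⁻¹) ((conj ξ ^ 2)⁻¹) (conj ξ) :=
    by simpa [Pi.neg_def] using (hasDerivAt_inv hc).neg
  have h2 : HasFDerivAt (fun u : ℂ => -u⁻¹)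
      (((1 : ℂ →L[ℂ] ℂ).smulRight ((conj ξ ^ 2)⁻¹)).restrictScalars ℝ) (conj ξ) :=
    (h1.hasFDerivAt).restrictScalars ℝ
  have h3 : HasFDerivAt (fun z : ℂ => conj z) conjCLM ξ := Complex.conjCLE.hasFDerivAt
  have h4 := h2.comp ξ h3
  have he : Amap = (fun u : ℂ => -u⁻¹) ∘ (fun z : ℂ => conj z) := by
    funext z; simp [Amap, neg_div, Function.comp]
  rw [he]
  convert h4 using 1 <;> try rfl
  ext w
  simp [mul_comm]

lemma fderiv_eq_neg_on_compl {r : ℂ → ℝ} {w : ℝ} (hr : ContDiff ℝ 2 r)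
    (hcw : ∀ ξ : ℂ, ξ ≠ 0 → r ξ + r (Amap ξ) = w) {z : ℂ} (hz : z ≠ 0) :
    (fderiv ℝ r (Amap z)).comp (Lc ((conj z ^ 2)⁻¹)) = -(fderiv ℝ r z) := by
  have hdr : Differentiable ℝ r := hr.differentiable (by norm_num)
  have h1 : HasFDerivAt (fun y => r (Amap y))
      ((fderiv ℝ r (Amap z)).comp (Lc ((conj z ^ 2)⁻¹))) z :=
    (hdr (Amap z)).hasFDerivAt.comp z (hasFDerivAt_Amap hz)
  have heq : (fun y => w - r y) =ᶠ[nhds z] (fun y => r (Amap y)) := by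
    filter_upwards [compl_singleton_mem_nhds hz] with y hy
    have h := hcw y hy
    simp only [Set.mem_compl_iff, Set.mem_singleton_iff] at hy
    linarith
  have h2 : HasFDerivAt (fun y => w - r y)
      ((fderiv ℝ r (Amap z)).comp (Lc ((conj z ^ 2)⁻¹))) z :=
    h1.congr_of_eventuallyEq heq
  rw [← h2.fderiv, fderiv_const_sub]

lemma lap_reflect {r : ℂ → ℝ} {w : ℝ} (hr : ContDiff ℝ 2 r)
    (hcw : ∀ ξ : ℂ, ξ ≠ 0 → r ξ + r (Amap ξ) = w) {ξ : ℂ} (hξ : ξ ≠ 0) :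
    (Complex.normSq ξ ^ 2)⁻¹ * lap r (Amap ξ) = - lap r ξ := by
  have hc : (conj ξ : ℂ) ≠ 0 := by simpa using hξ
  have h1 : ContDiff ℝ 1 (fderiv ℝ r) := hr.fderiv_right (le_refl _)
  set S := fderiv ℝ (fderiv ℝ r) ξ with hS
  set S' := fderiv ℝ (fderiv ℝ r) (Amap ξ) with hS'
  set dval : ℂ := -(2 * conj ξ) / ((conj ξ) ^ 2) ^ 2 with hdval
  have hcc : HasFDerivAt (fun z : ℂ => ((conj z) ^ 2)⁻¹) (Lc dval) ξ := by
    have hp : HasDerivAt (fun u : ℂ => (u ^ 2)⁻¹) dval (conj ξ) := by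
      simpa [hdval, Pi.inv_def] using ((hasDerivAt_pow 2 (conj ξ)).inv (pow_ne_zero 2 hc))
    have h2 := (hp.hasFDerivAt.restrictScalars ℝ).comp ξ
        (Complex.conjCLE.hasFDerivAt (x := ξ))
    convert h2 using 1 <;> try rfl
    ext v
    simp [mul_comm]
  have hd : HasFDerivAt (fun z : ℂ => Lc ((conj z ^ 2)⁻¹)) ((Lc dval).smulRight conjCLM) ξ :=
    hcc.smul_const conjCLM
  have hDr : HasFDerivAt (fun z : ℂ => fderiv ℝ r (Amap z))
      (S'.comp (Lc ((conj ξ ^ 2)⁻¹))) ξ :=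
    ((h1.differentiable one_ne_zero (Amap ξ)).hasFDerivAt).comp ξ (hasFDerivAt_Amap hξ)
  have hM := hDr.clm_comp hd
  have hφeq : (fun z : ℂ => (fderiv ℝ r (Amap z)).comp (Lc ((conj z ^ 2)⁻¹)))
      =ᶠ[nhds ξ] (fun z => -(fderiv ℝ r z)) := by
    filter_upwards [compl_singleton_mem_nhds hξ] with z hz
    simp only [Set.mem_compl_iff, Set.mem_singleton_iff] at hz
    exact fderiv_eq_neg_on_compl hr hcw hz
  have e1 : fderiv ℝ (fun z : ℂ => (fderiv ℝ r (Amap z)).comp (Lc ((conj z ^ 2)⁻¹))) ξ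
      = -S := by
    rw [hφeq.fderiv_eq, fderiv_fun_neg]
  rw [hM.fderiv] at e1
  have ev : ∀ v u : ℂ, -(S v u)
      = S' ((conj ξ ^ 2)⁻¹ * conj v) ((conj ξ ^ 2)⁻¹ * conj u)
        + fderiv ℝ r (Amap ξ) (dval * conj v * conj u) := by
    intro v u
    have h := congrArg (fun T : ℂ →L[ℝ] ℂ →L[ℝ] ℝ => T v u) e1
    simp only [ContinuousLinearMap.add_apply, ContinuousLinearMap.coe_comp',
      Function.comp_apply, ContinuousLinearMap.compL_apply, ContinuousLinearMap.flip_apply,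
      ContinuousLinearMap.smulRight_apply, ContinuousLinearMap.comp_apply,
      ContinuousLinearMap.neg_apply, Lc_apply, conjCLM_apply, smul_eq_mul,
      ContinuousLinearMap.smul_apply] at h
    linarith [h]
  have hsym : ∀ v u : ℂ, S' v u = S' u v :=
    (hr.contDiffAt.isSymmSndFDerivAt (by simp))
  have hq := quad S' hsym ((conj ξ ^ 2)⁻¹)
  have ev1 := ev 1 1
  have evI := ev Complex.I Complex.I
  have hzero : fderiv ℝ r (Amap ξ) (dval * conj 1 * conj 1)
      + fderiv ℝ r (Amap ξ) (dval * conj Complex.I * conj Complex.I) = 0 := by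
    rw [← map_add]
    have h0 : dval * conj 1 * conj 1 + dval * conj Complex.I * conj Complex.I = 0 := by
      simp [Complex.conj_I, mul_assoc, Complex.I_mul_I]
    rw [h0, map_zero]
  have hIc : S' ((conj ξ ^ 2)⁻¹ * conj Complex.I) ((conj ξ ^ 2)⁻¹ * conj Complex.I)
      = S' (Complex.I * (conj ξ ^ 2)⁻¹) (Complex.I * (conj ξ ^ 2)⁻¹) := by
    have hv : (conj ξ ^ 2)⁻¹ * conj Complex.I = -(Complex.I * (conj ξ ^ 2)⁻¹) := by
      simp [Complex.conj_I]; ring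
    rw [hv]
    simp
  have hns : Complex.normSq ((conj ξ ^ 2)⁻¹) = (Complex.normSq ξ ^ 2)⁻¹ := by
    simp [Complex.normSq_conj]
  rw [hIc] at evI
  rw [hns] at hq
  simp only [map_one, mul_one] at ev1 hzero
  simp only [lap, ← hS, ← hS']
  linarith [ev1, evI, hq, hzero]

lemma one_add_normSq_pos (ξ : ℂ) : (0:ℝ) < 1 + Complex.normSq ξ := by
  have := Complex.normSq_nonneg ξ; linarith

lemma dens_pos (ξ : ℂ) : 0 < dens ξ := by
  have := one_add_normSq_pos ξ
  unfold dens; positivity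

lemma dens_cont : Continuous dens :=
  continuous_const.div ((continuous_const.add Complex.continuous_normSq).pow 2)
    (fun ξ => by have := one_add_normSq_pos ξ; positivity)

lemma integral_radial : ∫ y in Set.Ioi (0:ℝ), y * (4 / (1 + y ^ 2) ^ 2) = 2 := by
  have hderiv : ∀ y ∈ Set.Ioi (0:ℝ), HasDerivAt (fun t : ℝ => -2 / (1 + t ^ 2))
      (y * (4 / (1 + y ^ 2) ^ 2)) y := by
    intro y _
    have h1 : HasDerivAt (fun t : ℝ => 1 + t ^ 2) (2 * y) y := by
      simpa using ((hasDerivAt_pow 2 y).const_add 1)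
    have hne : (1 + y ^ 2) ≠ 0 := by positivity
    have h2 := (hasDerivAt_const y (-2 : ℝ)).div h1 hne
    convert h2 using 1 <;> try rfl
    field_simp
    ring
  have hpos : ∀ y ∈ Set.Ioi (0:ℝ), 0 ≤ y * (4 / (1 + y ^ 2) ^ 2) := by
    intro y hy
    have h1 : (0:ℝ) < y := hy
    have h2 : (0:ℝ) < 1 + y ^ 2 := by positivity
    positivity
  have hcont : ContinuousWithinAt (fun t : ℝ => -2 / (1 + t ^ 2)) (Set.Ici 0) 0 := by
    apply ContinuousAt.continuousWithinAt
    apply ContinuousAt.div continuousAt_const (by fun_prop)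
    norm_num
  have htend : Filter.Tendsto (fun t : ℝ => -2 / (1 + t ^ 2)) Filter.atTop (nhds 0) := by
    have h1 : Filter.Tendsto (fun t : ℝ => 1 + t ^ 2) Filter.atTop Filter.atTop := by
      apply Filter.tendsto_atTop_add_const_left
      exact Filter.tendsto_pow_atTop (by norm_num)
    simpa using h1.const_div_atTop (-2)
  rw [MeasureTheory.integral_Ioi_of_hasDerivAt_of_nonneg hcont hderiv hpos htend]
  norm_num

lemma integral_dens : ∫ ξ : ℂ, dens ξ = 4 * Real.pi := by
  have h0 : ∀ ξ : ℂ, dens ξ = (fun t : ℝ => 4 / (1 + t ^ 2) ^ 2) ‖ξ‖ := by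
    intro ξ
    simp [dens, Complex.normSq_eq_norm_sq]
  calc ∫ ξ : ℂ, dens ξ = ∫ ξ : ℂ, (fun t : ℝ => 4 / (1 + t ^ 2) ^ 2) ‖ξ‖ := by
        simp only [h0]
    _ = (Module.finrank ℝ ℂ) • (volume (ball (0:ℂ) 1)).toReal •
          ∫ y in Set.Ioi (0:ℝ), y ^ (Module.finrank ℝ ℂ - 1) • (4 / (1 + y ^ 2) ^ 2) :=
        MeasureTheory.integral_fun_norm_addHaar (E := ℂ) volume
          (fun t : ℝ => 4 / (1 + t ^ 2) ^ 2)
    _ = 4 * Real.pi := by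
        rw [Complex.finrank_real_complex]
        have hball : (volume (ball (0:ℂ) 1)).toReal = Real.pi := by
          rw [Complex.volume_ball]
          simp [ENNReal.toReal_mul]
        norm_num [hball, smul_eq_mul]
        rw [integral_radial]
        ring

lemma integrable_dens : Integrable dens := by
  have hb : Integrable (fun ξ : ℂ => (1 + ‖ξ‖) ^ (-(4:ℝ))) (volume : Measure ℂ) :=
    integrable_one_add_norm (by norm_num [Complex.finrank_real_complex])
  refine (hb.const_mul 16).mono' dens_cont.aestronglyMeasurable ?_
  filter_upwards with ξ
  rw [Real.norm_of_nonneg (dens_pos ξ).le]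
  have hn : (0:ℝ) < 1 + ‖ξ‖ := by positivity
  have hns := one_add_normSq_pos ξ
  have h1 : (1 + ‖ξ‖) ^ 2 ≤ 2 * (1 + Complex.normSq ξ) := by
    have h2 : Complex.normSq ξ = ‖ξ‖ ^ 2 := by
      simp [Complex.normSq_eq_norm_sq]
    nlinarith [norm_nonneg ξ, sq_nonneg (1 - ‖ξ‖)]
  have h3 : (1 + ‖ξ‖) ^ (4:ℕ) ≤ 4 * (1 + Complex.normSq ξ) ^ 2 := by
    calc (1 + ‖ξ‖) ^ (4:ℕ) = ((1 + ‖ξ‖) ^ 2) ^ 2 := by ring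
      _ ≤ (2 * (1 + Complex.normSq ξ)) ^ 2 := by
          apply pow_le_pow_left₀ (by positivity) h1
      _ = 4 * (1 + Complex.normSq ξ) ^ 2 := by ring
  have h4 : (1 + ‖ξ‖) ^ (-(4:ℝ)) = ((1 + ‖ξ‖) ^ (4:ℕ))⁻¹ := by
    rw [← Real.rpow_natCast (1 + ‖ξ‖) 4, ← Real.rpow_neg hn.le]
    norm_num
  have h5 : dens ξ ≤ 16 / (1 + ‖ξ‖) ^ (4:ℕ) := by
    rw [dens, div_le_div_iff₀ (by positivity) (by positivity)]
    nlinarith [h3, hns]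
  calc dens ξ ≤ 16 / (1 + ‖ξ‖) ^ (4:ℕ) := h5
    _ = 16 * (1 + ‖ξ‖) ^ (-(4:ℝ)) := by rw [h4, div_eq_mul_inv]

lemma Lc_det (a : ℂ) : (Lc a).det = -Complex.normSq a := by
  have h : (Lc a).det = LinearMap.det ((Lc a) : ℂ →ₗ[ℝ] ℂ) := rfl
  rw [h, ← LinearMap.det_toMatrix Complex.basisOneI]
  rw [Matrix.det_fin_two]
  simp [LinearMap.toMatrix_apply, Complex.conj_I, Complex.normSq_apply]
  ring

lemma Amap_ne_zero {ξ : ℂ} (hξ : ξ ≠ 0) : Amap ξ ≠ 0 := by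
  simp [Amap, div_eq_iff, hξ]

lemma Amap_Amap {ξ : ℂ} (hξ : ξ ≠ 0) : Amap (Amap ξ) = ξ := by
  have hc : (conj ξ : ℂ) ≠ 0 := by simpa using hξ
  simp only [Amap, map_neg, map_div₀, map_one, Complex.conj_conj]
  field_simp

lemma normSq_Amap {ξ : ℂ} (_hξ : ξ ≠ 0) :
    Complex.normSq (Amap ξ) = (Complex.normSq ξ)⁻¹ := by
  simp [Amap, Complex.normSq_conj, Complex.normSq_div]

lemma Amap_image : Amap '' ({0}ᶜ : Set ℂ) = ({0}ᶜ : Set ℂ) := by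
  ext z
  simp only [Set.mem_image, Set.mem_compl_iff, Set.mem_singleton_iff]
  constructor
  · rintro ⟨y, hy, rfl⟩
    exact Amap_ne_zero hy
  · intro hz
    exact ⟨Amap z, Amap_ne_zero hz, Amap_Amap hz⟩

lemma Amap_injOn : Set.InjOn Amap ({0}ᶜ : Set ℂ) := by
  intro a ha b hb hab
  have h := congrArg Amap hab
  rwa [Amap_Amap (by simpa using ha), Amap_Amap (by simpa using hb)] at h

lemma integral_reflect (h : ℂ → ℝ) (w : ℝ)
    (hrefl : ∀ ξ : ℂ, ξ ≠ 0 → h (Amap ξ) = w - h ξ) :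
    ∫ ξ : ℂ, dens ξ * h ξ = ∫ ξ : ℂ, dens ξ * (w - h ξ) := by
  have hs : MeasurableSet ({0}ᶜ : Set ℂ) := (measurableSet_singleton 0).compl
  have hres : (volume : Measure ℂ).restrict ({0}ᶜ : Set ℂ) = volume :=
    MeasureTheory.restrict_compl_singleton 0
  have hcv := integral_image_eq_integral_abs_det_fderiv_smul (volume : Measure ℂ) hs
    (fun x hx => (hasFDerivAt_Amap (by simpa using hx)).hasFDerivWithinAt)
    Amap_injOn (fun ξ => dens ξ * h ξ)
  rw [Amap_image] at hcv
  calc ∫ ξ : ℂ, dens ξ * h ξ = ∫ ξ in ({0}ᶜ : Set ℂ), dens ξ * h ξ := by rw [hres]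
    _ = ∫ ξ in ({0}ᶜ : Set ℂ),
          |(Lc ((conj ξ ^ 2)⁻¹)).det| • (dens (Amap ξ) * h (Amap ξ)) := hcv
    _ = ∫ ξ in ({0}ᶜ : Set ℂ), dens ξ * (w - h ξ) := by
        apply setIntegral_congr_fun hs
        intro ξ hξ
        have hξ0 : ξ ≠ 0 := by simpa using hξ
        have hns : Complex.normSq ξ ≠ 0 := by
          simpa [Complex.normSq_eq_zero] using hξ0
        have hdet : |(Lc ((conj ξ ^ 2)⁻¹)).det| = (Complex.normSq ξ ^ 2)⁻¹ := by
          rw [Lc_det, abs_neg, _root_.abs_of_nonneg (Complex.normSq_nonneg _)]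
          simp [Complex.normSq_conj]
        simp only []
        rw [hdet, hrefl ξ hξ0, smul_eq_mul]
        have hdA : dens (Amap ξ) = 4 / (1 + (Complex.normSq ξ)⁻¹) ^ 2 := by
          rw [dens, normSq_Amap hξ0]
        rw [hdA, dens]
        have h1 : (0:ℝ) < Complex.normSq ξ :=
          lt_of_le_of_ne (Complex.normSq_nonneg ξ) (Ne.symm hns)
        field_simp
        ring
    _ = ∫ ξ : ℂ, dens ξ * (w - h ξ) := by rw [hres]

lemma muSphere_eq :
    muSphere = volume.withDensity (fun ξ => ((dens ξ).toNNReal : ENNReal)) := rfl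

lemma dens_toNNReal_measurable : Measurable (fun ξ : ℂ => (dens ξ).toNNReal) :=
  dens_cont.measurable.real_toNNReal

lemma integral_muSphere (g : ℂ → ℝ) :
    ∫ ξ, g ξ ∂muSphere = ∫ ξ : ℂ, dens ξ * g ξ := by
  rw [muSphere_eq, integral_withDensity_eq_integral_smul dens_toNNReal_measurable g]
  congr 1
  funext ξ
  rw [NNReal.smul_def, Real.coe_toNNReal _ (dens_pos ξ).le, smul_eq_mul]

lemma integrable_muSphere_iff (g : ℂ → ℝ) :
    Integrable g muSphere ↔ Integrable (fun ξ : ℂ => dens ξ * g ξ) volume := by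
  rw [muSphere_eq, integrable_withDensity_iff_integrable_smul dens_toNNReal_measurable]
  constructor <;> intro hI <;> [skip; skip] <;>
    · apply hI.congr
      filter_upwards with ξ
      rw [NNReal.smul_def, Real.coe_toNNReal _ (dens_pos ξ).le, smul_eq_mul]

end Aux

/-- the averaged-area identity: for a constant width surface the area
integral equals `π w²` minus the deficit integral. -/
theorem constant_width_area_identity
    (r : ℂ → ℝ) (w : ℝ) (hr : ContDiff ℝ 2 r) (hcw : ConstWidth r w)
    (hint₁ : Integrable
      (fun ξ => (r ξ + psiSlope r ξ) ^ 2 - Complex.normSq (sigmaSlope r ξ)) muSphere)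
    (hint₂ : Integrable
      (fun ξ => Complex.normSq (sigmaSlope r ξ) - (r ξ - w / 2 + psiSlope r ξ) ^ 2) muSphere) :
    ∫ ξ, ((r ξ + psiSlope r ξ) ^ 2 - Complex.normSq (sigmaSlope r ξ)) ∂muSphere
      = Real.pi * w ^ 2
        - ∫ ξ, (Complex.normSq (sigmaSlope r ξ) - (r ξ - w / 2 + psiSlope r ξ) ^ 2) ∂muSphere := by
  have hcwA : ∀ ξ : ℂ, ξ ≠ 0 → r ξ + r (Amap ξ) = w := by
    intro ξ hξ
    simpa [Amap] using hcw ξ hξ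
  -- reflection identity for r + ψ
  have hrefl : ∀ ξ : ℂ, ξ ≠ 0 →
      (r (Amap ξ) + psiSlope r (Amap ξ)) = w - (r ξ + psiSlope r ξ) := by
    intro ξ hξ
    have hns : Complex.normSq ξ ≠ 0 := by simpa [Complex.normSq_eq_zero] using hξ
    have hnp : (0:ℝ) < Complex.normSq ξ :=
      lt_of_le_of_ne (Complex.normSq_nonneg ξ) (Ne.symm hns)
    have hL := lap_reflect hr hcwA hξ
    have hlapA : lap r (Amap ξ) = -(Complex.normSq ξ ^ 2 * lap r ξ) := by
      have h2 : (Complex.normSq ξ ^ 2) ≠ 0 := by positivity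
      field_simp at hL
      linarith [hL]
    have hpsiA : psiSlope r (Amap ξ) = - psiSlope r ξ := by
      rw [psi_eq hr, psi_eq hr, normSq_Amap hξ, hlapA]
      field_simp
      ring
    have hrA : r (Amap ξ) = w - r ξ := by
      have := hcwA ξ hξ; linarith
    rw [hrA, hpsiA]
    ring
  -- the sum of the two integrands
  have key : (∫ ξ, ((r ξ + psiSlope r ξ) ^ 2 - Complex.normSq (sigmaSlope r ξ)) ∂muSphere)
      + (∫ ξ, (Complex.normSq (sigmaSlope r ξ) - (r ξ - w / 2 + psiSlope r ξ) ^ 2) ∂muSphere)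
      = Real.pi * w ^ 2 := by
    rw [← integral_add hint₁ hint₂]
    have hfun : (fun ξ => ((r ξ + psiSlope r ξ) ^ 2 - Complex.normSq (sigmaSlope r ξ))
          + (Complex.normSq (sigmaSlope r ξ) - (r ξ - w / 2 + psiSlope r ξ) ^ 2))
        = fun ξ => w * (r ξ + psiSlope r ξ) - w ^ 2 / 4 := by
      funext ξ
      ring
    rw [hfun]
    by_cases hw : w = 0
    · simp [hw]
    · have hint : Integrable (fun ξ => w * (r ξ + psiSlope r ξ) - w ^ 2 / 4) muSphere := by
        rw [← hfun]
        exact hint₁.add hint₂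
      have hconst : Integrable (fun _ : ℂ => w ^ 2 / 4) muSphere := by
        rw [integrable_muSphere_iff]
        exact integrable_dens.mul_const _
      have hwh : Integrable (fun ξ => w * (r ξ + psiSlope r ξ)) muSphere := by
        have h1 := hint.add hconst
        apply h1.congr
        filter_upwards with ξ
        simp only [Pi.add_apply]
        ring
      have hh : Integrable (fun ξ => r ξ + psiSlope r ξ) muSphere := by
        have h1 := hwh.const_mul w⁻¹
        apply h1.congr
        filter_upwards with ξ
        field_simp
      -- compute ∫ (r + ψ) dμ = 2πw
      have hdh : Integrable (fun ξ : ℂ => dens ξ * (r ξ + psiSlope r ξ)) volume :=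
        (integrable_muSphere_iff _).1 hh
      have hIr := integral_reflect (fun ξ => r ξ + psiSlope r ξ) w hrefl
      have hsub : ∫ ξ : ℂ, dens ξ * (w - (r ξ + psiSlope r ξ))
          = w * (4 * Real.pi) - ∫ ξ : ℂ, dens ξ * (r ξ + psiSlope r ξ) := by
        have hfun2 : (fun ξ : ℂ => dens ξ * (w - (r ξ + psiSlope r ξ)))
            = fun ξ : ℂ => dens ξ * w - dens ξ * (r ξ + psiSlope r ξ) := by
          funext ξ; ring
        rw [hfun2, integral_sub (integrable_dens.mul_const w) hdh]
        rw [integral_mul_const, integral_dens]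
        ring
      have hI : ∫ ξ, (r ξ + psiSlope r ξ) ∂muSphere = 2 * Real.pi * w := by
        rw [integral_muSphere]
        have : (2:ℝ) * (∫ ξ : ℂ, dens ξ * (r ξ + psiSlope r ξ)) = w * (4 * Real.pi) := by
          rw [two_mul]
          nth_rewrite 1 [hIr]
          rw [hsub]
          ring
        linarith
      rw [integral_sub hwh hconst, integral_const_mul, hI]
      have hc : ∫ x : ℂ, (w ^ 2 / 4 : ℝ) ∂muSphere = w ^ 2 / 4 * (4 * Real.pi) := by
        rw [integral_muSphere]
        rw [integral_mul_const, integral_dens]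
        ring
      rw [hc]
      ring
  linarith [key]

end
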